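/- arXiv:2212.00447 — 2 statements merged into one kernel-verified Lean document; each statement's English description precedes it below -/
import Mathlib

section
/- Let A ∈ ℝ^{d×d} have spectral radius ρ(A) ≤ ρ_0 < 1 and ‖A‖ ≤ A*. Then for every ρ_1 ∈ (ρ_0, 1) there exists a constant C = C(ρ_0, ρ_1, A*) such that ‖A^k‖ ≤ C ρ_1^k for all k ≥ 0, with C uniform over all such matrices A. -/
open Matrix
open scoped Matrix.Norms.L2Operator NNReal ENNReal Real

/-- Euclidean operator norm of a real square matrix. -/
noncomputable def matOpNorm {d : ℕ} (A : Matrix (Fin d) (Fin d) ℝ) : ℝ :=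
  ‖Matrix.toEuclideanCLM (𝕜 := ℝ) A‖

/-- Spectral radius of a real square matrix: the maximal modulus of its complex eigenvalues. -/
noncomputable def specRad {d : ℕ} (A : Matrix (Fin d) (Fin d) ℝ) : ℝ :=
  ⨆ z ∈ spectrum ℂ (A.map (algebraMap ℝ ℂ)), ‖z‖

/-- Compatibility: the complex modulus as an absolute value. -/
noncomputable def Complex.abs : AbsoluteValue ℂ ℝ where
  toFun z := ‖z‖
  map_mul' := norm_mul
  nonneg' := norm_nonneg
  eq_zero' _ := norm_eq_zero
  add_le' := norm_add_le

lemma Complex.norm_eq_abs (z : ℂ) : ‖z‖ = Complex.abs z := rfl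

lemma Complex.abs_ofReal (r : ℝ) : Complex.abs (r : ℂ) = |r| := by
  rw [← Complex.norm_eq_abs, Complex.norm_real, Real.norm_eq_abs]

lemma Matrix.toEuclideanCLM_piLp_equiv_symm {n 𝕜 : Type*} [Fintype n] [DecidableEq n] [RCLike 𝕜]
    (A : Matrix n n 𝕜) (x : n → 𝕜) :
    Matrix.toEuclideanCLM (n := n) (𝕜 := 𝕜) A ((WithLp.equiv 2 _).symm x) =
      (WithLp.equiv 2 _).symm (Matrix.toLin' A x) := rfl

section Aux
open Polynomial Filter

variable {d : ℕ}

-- entry norm ≤ Euclidean norm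
lemma euclid_entry_le {𝕜 : Type*} [RCLike 𝕜] (v : EuclideanSpace 𝕜 (Fin d)) (i : Fin d) :
    ‖v i‖ ≤ ‖v‖ := by
  rw [EuclideanSpace.norm_eq]
  rw [show ‖v i‖ = Real.sqrt (‖v i‖^2) by rw [Real.sqrt_sq (norm_nonneg _)]]
  apply Real.sqrt_le_sqrt
  exact Finset.single_le_sum (f := fun j => ‖v j‖^2) (fun j _ => sq_nonneg _) (Finset.mem_univ i)

-- entry ≤ op norm (general RCLike)
lemma entry_le_opNorm {𝕜 : Type*} [RCLike 𝕜] [DecidableEq (Fin d)]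
    (M : Matrix (Fin d) (Fin d) 𝕜) (i j : Fin d) :
    ‖M i j‖ ≤ ‖Matrix.toEuclideanCLM (𝕜 := 𝕜) M‖ := by
  have h := (Matrix.toEuclideanCLM (𝕜 := 𝕜) M).le_opNorm ((WithLp.equiv 2 _).symm (Pi.single j 1))
  rw [Matrix.toEuclideanCLM_piLp_equiv_symm] at h
  have h1 : ‖((WithLp.equiv 2 (Fin d → 𝕜)).symm (Pi.single j (1:𝕜)) : EuclideanSpace 𝕜 (Fin d))‖ = 1 := by
    simpa using EuclideanSpace.norm_single j (1:𝕜)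
  have h2 : ‖M i j‖ ≤ ‖((WithLp.equiv 2 (Fin d → 𝕜)).symm (Matrix.toLin' M (Pi.single j 1)) : EuclideanSpace 𝕜 (Fin d))‖ := by
    have := euclid_entry_le ((WithLp.equiv 2 (Fin d → 𝕜)).symm (Matrix.toLin' M (Pi.single j 1))) i
    simpa [Matrix.toLin'_apply, Matrix.mulVec_single] using this
  rw [h1, mul_one] at h
  exact h2.trans h

lemma norm_stdBasisMatrix_le (i j : Fin d) (c : ℂ) :
    ‖(Matrix.single i j c : Matrix (Fin d) (Fin d) ℂ)‖ ≤ ‖c‖ := by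
  rw [Matrix.cstar_norm_def]
  apply ContinuousLinearMap.opNorm_le_bound _ (norm_nonneg c)
  intro x
  have hx : x = (WithLp.equiv 2 _).symm (WithLp.equiv 2 _ x) := rfl
  rw [hx, Matrix.toEuclideanCLM_piLp_equiv_symm, Matrix.toLin'_apply]
  have hmv : (Matrix.single i j c) *ᵥ (WithLp.equiv 2 _ x)
      = Pi.single i (c * (WithLp.equiv 2 _ x) j) := by
    ext k
    rw [Pi.single_apply]
    simp only [Matrix.mulVec, dotProduct, Matrix.single, Matrix.of_apply, ite_and]
    rcases eq_or_ne k i with rfl | hk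
    · simp [Finset.sum_ite_eq]
    · simp [Ne.symm hk, hk]
  rw [hmv]
  have h1 : ‖((WithLp.equiv 2 (Fin d → ℂ)).symm (Pi.single i (c * (WithLp.equiv 2 _ x) j)) :
      EuclideanSpace ℂ (Fin d))‖ = ‖c * (WithLp.equiv 2 _ x) j‖ := by
    simpa using EuclideanSpace.norm_single i (c * (WithLp.equiv 2 _ x) j)
  rw [h1, norm_mul]
  have := euclid_entry_le x j
  calc ‖c‖ * ‖x j‖ ≤ ‖c‖ * ‖x‖ := by gcongr
    _ = ‖c‖ * ‖(WithLp.equiv 2 _).symm ((WithLp.equiv 2 _) x)‖ := rfl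

lemma opNorm_le_sum_entries (N : Matrix (Fin d) (Fin d) ℂ) :
    ‖N‖ ≤ ∑ i, ∑ j, Complex.abs (N i j) := by
  conv_lhs => rw [Matrix.matrix_eq_sum_single N]
  refine (norm_sum_le _ _).trans ?_
  apply Finset.sum_le_sum; intro i _
  refine (norm_sum_le _ _).trans ?_
  apply Finset.sum_le_sum; intro j _
  simpa [Complex.norm_eq_abs] using norm_stdBasisMatrix_le i j (N i j)

lemma norm_coe_euclid (w : Fin d → ℝ) :
    ‖((WithLp.equiv 2 (Fin d → ℂ)).symm (fun i => (w i : ℂ)) : EuclideanSpace ℂ (Fin d))‖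
      = ‖((WithLp.equiv 2 (Fin d → ℝ)).symm w : EuclideanSpace ℝ (Fin d))‖ := by
  rw [EuclideanSpace.norm_eq, EuclideanSpace.norm_eq]
  congr 1
  apply Finset.sum_congr rfl
  intro i _
  simp [Complex.norm_real]

lemma real_opNorm_le_complex (M : Matrix (Fin d) (Fin d) ℝ) :
    ‖Matrix.toEuclideanCLM (𝕜 := ℝ) M‖ ≤ ‖M.map (algebraMap ℝ ℂ)‖ := by
  apply ContinuousLinearMap.opNorm_le_bound _ (norm_nonneg _)
  intro x
  set v : Fin d → ℝ := WithLp.equiv 2 _ x with hv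
  have hx : x = (WithLp.equiv 2 _).symm v := rfl
  set x' : EuclideanSpace ℂ (Fin d) := (WithLp.equiv 2 (Fin d → ℂ)).symm (fun i => (v i : ℂ))
  have key : (Matrix.toEuclideanCLM (𝕜 := ℂ) (M.map (algebraMap ℝ ℂ))) x'
      = (WithLp.equiv 2 (Fin d → ℂ)).symm (fun i => (((M *ᵥ v) i : ℝ) : ℂ)) := by
    rw [Matrix.toEuclideanCLM_piLp_equiv_symm, Matrix.toLin'_apply]
    congr 1
    ext i
    simp only [Matrix.mulVec, dotProduct, Matrix.map_apply]
    push_cast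
    rfl
  have hnx : ‖x'‖ = ‖x‖ := by rw [hx]; exact norm_coe_euclid v
  have hTx : ‖(Matrix.toEuclideanCLM (𝕜 := ℝ) M) x‖ = ‖(Matrix.toEuclideanCLM (𝕜 := ℂ) (M.map (algebraMap ℝ ℂ))) x'‖ := by
    rw [key, hx, Matrix.toEuclideanCLM_piLp_equiv_symm, Matrix.toLin'_apply, norm_coe_euclid]
  rw [hTx, ← hnx, Matrix.cstar_norm_def]
  exact (Matrix.toEuclideanCLM (𝕜 := ℂ) (M.map (algebraMap ℝ ℂ))).le_opNorm x'

lemma abs_det_le (N : Matrix (Fin d) (Fin d) ℂ) (c : ℝ) (hc : 0 ≤ c)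
    (h : ∀ i j, Complex.abs (N i j) ≤ c) :
    Complex.abs N.det ≤ (Nat.factorial d) * c ^ d := by
  rw [Matrix.det_apply]
  refine (AbsoluteValue.sum_le _ _ _).trans ?_
  have hterm : ∀ σ : Equiv.Perm (Fin d),
      Complex.abs (Equiv.Perm.sign σ • ∏ i, N (σ i) i) ≤ c ^ d := by
    intro σ
    have habs : Complex.abs (Equiv.Perm.sign σ • ∏ i, N (σ i) i)
        = Complex.abs (∏ i, N (σ i) i) := by
      rcases Int.units_eq_one_or (Equiv.Perm.sign σ) with hs | hs <;> simp [hs]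
    rw [habs]
    rw [map_prod]
    calc ∏ i, Complex.abs (N (σ i) i) ≤ ∏ _i : Fin d, c :=
          Finset.prod_le_prod (fun i _ => AbsoluteValue.nonneg _ _) (fun i _ => h _ _)
      _ = c ^ d := by simp
  refine (Finset.sum_le_sum (fun σ _ => hterm σ)).trans ?_
  simp [Finset.sum_const, Fintype.card_perm]

lemma abs_adjugate_le (N : Matrix (Fin d) (Fin d) ℂ) (c : ℝ) (hc : 1 ≤ c)
    (h : ∀ i j, Complex.abs (N i j) ≤ c) (i j : Fin d) :
    Complex.abs (N.adjugate i j) ≤ (Nat.factorial d) * c ^ d := by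
  rw [Matrix.adjugate_apply]
  apply abs_det_le _ c (le_trans zero_le_one hc)
  intro k l
  rw [Matrix.updateRow_apply]
  rcases eq_or_ne k j with rfl | hk
  · simp only [if_pos rfl]
    rcases eq_or_ne l i with rfl | hl
    · simp [hc]
    · simp [Pi.single_apply, hl, le_trans zero_le_one hc, Ne.symm hl]
  · simp [hk, h k l]


lemma prod_abs_lower (s : Multiset ℂ) (c : ℝ) (hc : 0 ≤ c)
    (h : ∀ x ∈ s, c ≤ Complex.abs x) :
    c ^ (Multiset.card s) ≤ Complex.abs s.prod := by
  induction s using Multiset.induction_on with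
  | empty => simp
  | cons a s ih =>
    have ha := h a (Multiset.mem_cons_self a s)
    have hs := ih (fun x hx => h x (Multiset.mem_cons_of_mem hx))
    rw [Multiset.prod_cons, _root_.map_mul, Multiset.card_cons, pow_succ']
    exact mul_le_mul ha hs (pow_nonneg hc _) (AbsoluteValue.nonneg _ _)

lemma charpoly_eval (B : Matrix (Fin d) (Fin d) ℂ) (w : ℂ) :
    (Matrix.charpoly B).eval w = Matrix.det (w • (1 : Matrix (Fin d) (Fin d) ℂ) - B) := by
  rw [Matrix.charpoly, ← Polynomial.coe_evalRingHom, RingHom.map_det]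
  congr 1
  ext i j
  rcases eq_or_ne i j with rfl | hij
  · simp [Matrix.charmatrix_apply_eq, Matrix.one_apply_eq]
  · simp [Matrix.charmatrix_apply_ne _ _ _ hij, Matrix.one_apply_ne hij]

lemma det_resolvent_lower (ρ₀ ρ₁ : ℝ) (h0 : 0 ≤ ρ₀) (h01 : ρ₀ < ρ₁)
    (B : Matrix (Fin d) (Fin d) ℂ)
    (hsp : ∀ μ ∈ (Matrix.charpoly B).roots, Complex.abs μ ≤ ρ₀)
    (z : ℂ) (hz : Complex.abs z = ρ₁⁻¹) :
    ((ρ₁ - ρ₀)/ρ₁)^d ≤ Complex.abs (Matrix.det (1 - z • B)) := by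
  have hρ₁ : 0 < ρ₁ := h0.trans_lt h01
  have hz0 : z ≠ 0 := by
    intro h; rw [h] at hz; simp at hz
    exact absurd hz (ne_of_gt hρ₁).symm
  set w : ℂ := z⁻¹ with hw
  have habsw : Complex.abs w = ρ₁ := by
    rw [hw, map_inv₀, hz, inv_inv]
  have hid : (1 : Matrix (Fin d) (Fin d) ℂ) - z • B = (-z) • (B - w • 1) := by
    rw [smul_sub, smul_smul, show -z * w = -1 by rw [hw, neg_mul, mul_inv_cancel₀ hz0]]
    simp only [neg_smul, one_smul, sub_neg_eq_add, neg_smul]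
    abel
  have hdet : Matrix.det (1 - z • B) = z ^ d * (Matrix.charpoly B).eval w := by
    rw [hid, Matrix.det_smul, charpoly_eval]
    rw [show B - w • 1 = -(w • 1 - B) by abel, Matrix.det_neg]
    simp only [Fintype.card_fin]
    ring_nf
    rw [show d * 2 = 2 * d by ring, pow_mul]
    norm_num
  -- factor charpoly
  set p := Matrix.charpoly B with hp
  have hmonic := Matrix.charpoly_monic B
  have hsplits : p.Splits := IsAlgClosed.splits p
  have hcard : Multiset.card p.roots = d := by
    rw [← hsplits.natDegree_eq_card_roots, Matrix.charpoly_natDegree_eq_dim, Fintype.card_fin]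
  have hfact : p = (p.roots.map fun a => X - C a).prod :=
    hsplits.eq_prod_roots_of_monic hmonic
  have heval : p.eval w = (p.roots.map fun a => w - a).prod := by
    conv_lhs => rw [hfact]
    rw [Polynomial.eval_multiset_prod, Multiset.map_map]
    simp
  have hevalabs : (ρ₁ - ρ₀) ^ d ≤ Complex.abs (p.eval w) := by
    rw [heval]
    have := prod_abs_lower (p.roots.map fun a => w - a) (ρ₁ - ρ₀) (by linarith) ?_
    · rwa [Multiset.card_map, hcard] at this
    · intro x hx
      obtain ⟨a, ha, rfl⟩ := Multiset.mem_map.mp hx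
      have h1 : Complex.abs a ≤ ρ₀ := hsp a ha
      have h2 : Complex.abs w - Complex.abs a ≤ Complex.abs (w - a) := by
        simpa [Complex.norm_eq_abs] using norm_sub_norm_le w a
      rw [habsw] at h2; linarith
  rw [hdet, _root_.map_mul, map_pow, hz]
  rw [div_pow, div_eq_mul_inv]
  calc (ρ₁ - ρ₀) ^ d * (ρ₁ ^ d)⁻¹ = (ρ₁⁻¹)^d * (ρ₁ - ρ₀) ^ d := by rw [inv_pow]; ring
    _ ≤ (ρ₁⁻¹)^d * Complex.abs (p.eval w) := by
        have : (0:ℝ) ≤ (ρ₁⁻¹)^d := by positivity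
        exact mul_le_mul_of_nonneg_left hevalabs this

lemma root_mem_spectrum (B : Matrix (Fin d) (Fin d) ℂ) (μ : ℂ)
    (h : μ ∈ (Matrix.charpoly B).roots) : μ ∈ spectrum ℂ B := by
  have hroot : (Matrix.charpoly B).IsRoot μ := (Polynomial.mem_roots'.mp h).2
  have hdet : Matrix.det (μ • (1 : Matrix (Fin d) (Fin d) ℂ) - B) = 0 := by
    rw [← charpoly_eval]; exact hroot
  rw [spectrum.mem_iff]
  intro hunit
  rw [Algebra.algebraMap_eq_smul_one] at hunit
  have := (Matrix.isUnit_iff_isUnit_det _).mp hunit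
  rw [hdet] at this
  simp at this

lemma resolvent_bound (ρ₀ ρ₁ Astar : ℝ) (h0 : 0 ≤ ρ₀) (h01 : ρ₀ < ρ₁) (hA : 0 ≤ Astar)
    (B : Matrix (Fin d) (Fin d) ℂ)
    (hsp : ∀ μ ∈ (Matrix.charpoly B).roots, Complex.abs μ ≤ ρ₀)
    (hBent : ∀ i j, Complex.abs (B i j) ≤ Astar)
    (z : ℂ) (hz : Complex.abs z = ρ₁⁻¹) :
    ‖Ring.inverse (1 - z • B)‖ ≤
      (((ρ₁ - ρ₀)/ρ₁)^d)⁻¹ * ((d:ℝ)^2 * (Nat.factorial d) * (1 + ρ₁⁻¹ * Astar)^d) := by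
  have hρ₁ : 0 < ρ₁ := h0.trans_lt h01
  set δ : ℝ := ((ρ₁ - ρ₀)/ρ₁)^d with hδ
  have hδpos : 0 < δ := by
    apply pow_pos; apply div_pos <;> linarith
  set c : ℝ := 1 + ρ₁⁻¹ * Astar with hc
  have hc1 : 1 ≤ c := by
    have h' : 0 ≤ ρ₁⁻¹ * Astar := mul_nonneg (by positivity) hA
    rw [hc]; linarith
  set M : Matrix (Fin d) (Fin d) ℂ := 1 - z • B with hM
  have hdet : δ ≤ Complex.abs M.det := det_resolvent_lower ρ₀ ρ₁ h0 h01 B hsp z hz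
  have hdet0 : M.det ≠ 0 := by
    intro h; rw [h] at hdet; simp at hdet; linarith
  have hent : ∀ i j, Complex.abs (M i j) ≤ c := by
    intro i j
    have hBij : Complex.abs (z * B i j) ≤ ρ₁⁻¹ * Astar := by
      rw [_root_.map_mul, hz]
      exact mul_le_mul_of_nonneg_left (hBent i j) (by positivity)
    rw [hM]
    simp only [Matrix.sub_apply, Matrix.smul_apply, smul_eq_mul]
    rcases eq_or_ne i j with rfl | hij
    · rw [Matrix.one_apply_eq]
      calc Complex.abs (1 - z * B i i) ≤ Complex.abs 1 + Complex.abs (z * B i i) := by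
            simpa using Complex.abs.sub_le_add 1 (z * B i i)
        _ ≤ 1 + ρ₁⁻¹ * Astar := by rw [_root_.map_one]; exact add_le_add_right hBij 1
    · rw [Matrix.one_apply_ne hij]
      calc Complex.abs (0 - z * B i j) = Complex.abs (z * B i j) := by simp
        _ ≤ ρ₁⁻¹ * Astar := hBij
        _ ≤ c := by linarith
  have hinv : Ring.inverse M = M⁻¹ := (Matrix.nonsing_inv_eq_ringInverse M).symm
  rw [hinv, Matrix.inv_def, Ring.inverse_eq_inv]
  rw [norm_smul]
  have hadj : ‖M.adjugate‖ ≤ (d:ℝ)^2 * (Nat.factorial d) * c^d := by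
    refine (opNorm_le_sum_entries _).trans ?_
    calc ∑ i, ∑ j, Complex.abs (M.adjugate i j)
        ≤ ∑ _i : Fin d, ∑ _j : Fin d, ((Nat.factorial d) * c^d : ℝ) :=
          Finset.sum_le_sum fun i _ => Finset.sum_le_sum fun j _ =>
            abs_adjugate_le M c hc1 hent i j
      _ = (d:ℝ)^2 * (Nat.factorial d) * c^d := by
          simp [Finset.sum_const]; ring
  have hdetinv : ‖(M.det)⁻¹‖ ≤ δ⁻¹ := by
    rw [norm_inv, Complex.norm_eq_abs]
    exact inv_anti₀ hδpos hdet
  calc ‖(M.det)⁻¹‖ * ‖M.adjugate‖ ≤ δ⁻¹ * ((d:ℝ)^2 * (Nat.factorial d) * c^d) := by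
        apply mul_le_mul hdetinv hadj (norm_nonneg _) (by positivity)

lemma complex_power_bound (ρ₀ ρ₁ Astar : ℝ) (h0 : 0 ≤ ρ₀) (h01 : ρ₀ < ρ₁) (h11 : ρ₁ < 1)
    (hA : 0 ≤ Astar) :
    ∃ C : ℝ, 0 < C ∧ ∀ B : Matrix (Fin d) (Fin d) ℂ,
      (∀ μ ∈ spectrum ℂ B, Complex.abs μ ≤ ρ₀) →
      (∀ i j, Complex.abs (B i j) ≤ Astar) →
      ∀ k : ℕ, ‖B ^ k‖ ≤ C * ρ₁ ^ k := by
  have hρ₁ : 0 < ρ₁ := h0.trans_lt h01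
  set Q : ℝ := (((ρ₁ - ρ₀)/ρ₁)^d)⁻¹ * ((d:ℝ)^2 * (Nat.factorial d) * (1 + ρ₁⁻¹ * Astar)^d)
    with hQ
  have hQ0 : 0 ≤ Q := by
    apply mul_nonneg
    · apply inv_nonneg.mpr; apply pow_nonneg; apply div_nonneg <;> linarith
    · positivity
  refine ⟨Q + 1, by linarith, ?_⟩
  intro B hspec hent k
  have hsp : ∀ μ ∈ (Matrix.charpoly B).roots, Complex.abs μ ≤ ρ₀ :=
    fun μ hμ => hspec μ (root_mem_spectrum B μ hμ)
  -- spectral radius bound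
  have hsr : spectralRadius ℂ B ≤ ENNReal.ofReal ρ₀ := by
    rw [spectralRadius]
    refine iSup₂_le fun μ hμ => ?_
    have h1 : ‖μ‖ ≤ ρ₀ := by rw [Complex.norm_eq_abs]; exact hspec μ hμ
    rw [← norm_toNNReal, ENNReal.ofReal]
    exact ENNReal.coe_le_coe.mpr (Real.toNNReal_mono h1)
  set r' : ℝ≥0 := (ρ₁⁻¹).toNNReal with hr'
  have hr'pos : 0 < r' := Real.toNNReal_pos.mpr (by positivity)
  have hr'coe : (r' : ℝ) = ρ₁⁻¹ := Real.coe_toNNReal _ (by positivity)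
  have hlt : (r' : ℝ≥0∞) < (spectralRadius ℂ B)⁻¹ := by
    refine lt_of_le_of_lt (le_refl _) ?_
    calc (r' : ℝ≥0∞) = ENNReal.ofReal ρ₁⁻¹ := by
          rw [ENNReal.ofReal, hr']
      _ < (ENNReal.ofReal ρ₀)⁻¹ := by
          rcases eq_or_lt_of_le h0 with rfl | hpos
          · rw [ENNReal.ofReal_zero, ENNReal.inv_zero]
            exact ENNReal.ofReal_lt_top
          · rw [← ENNReal.ofReal_inv_of_pos hpos]
            exact ENNReal.ofReal_lt_ofReal_iff (by positivity) |>.mpr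
              (by apply inv_strictAnti₀ hpos h01)
      _ ≤ (spectralRadius ℂ B)⁻¹ := ENNReal.inv_le_inv.mpr hsr
  set f : ℂ → Matrix (Fin d) (Fin d) ℂ := fun z => Ring.inverse (1 - z • B) with hf
  have hdiff : DifferentiableOn ℂ f (Metric.closedBall 0 (r' : ℝ)) :=
    spectrum.differentiableOn_inverse_one_sub_smul hlt
  have H₁ : HasFPowerSeriesOnBall f (cauchyPowerSeries f 0 r') 0 r' :=
    hdiff.hasFPowerSeriesOnBall hr'pos
  have H₂ := spectrum.hasFPowerSeriesOnBall_inverse_one_sub_smul ℂ B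
  have H₃ := H₂.exchange_radius H₁
  have heq : (fun n => ContinuousMultilinearMap.mkPiRing ℂ (Fin n) (B ^ n))
      = cauchyPowerSeries f 0 r' :=
    H₃.hasFPowerSeriesAt.eq_formalMultilinearSeries H₁.hasFPowerSeriesAt
  -- bound on the circle
  have hcirc : ∀ θ : ℝ, ‖f (circleMap 0 (r' : ℝ) θ)‖ ≤ Q := by
    intro θ
    apply resolvent_bound ρ₀ ρ₁ Astar h0 h01 hA B hsp hent
    rw [← Complex.norm_eq_abs, norm_circleMap_zero,
      abs_of_nonneg (by positivity : (0:ℝ) ≤ (r' : ℝ)), hr'coe]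
  -- integrability
  have hcball : ∀ θ : ℝ, circleMap 0 (r' : ℝ) θ ∈ Metric.closedBall (0:ℂ) (r' : ℝ) := by
    intro θ
    rw [Metric.mem_closedBall, Complex.dist_eq, sub_zero]
    rw [norm_circleMap_zero, abs_of_nonneg (by positivity)]
  have hcont : ContinuousOn (fun θ : ℝ => ‖f (circleMap 0 (r' : ℝ) θ)‖) (Set.Icc 0 (2*Real.pi)) := by
    apply ContinuousOn.norm
    exact (hdiff.continuousOn.comp (continuous_circleMap 0 (r' : ℝ)).continuousOn
      (fun θ _ => hcball θ))
  have hint : IntervalIntegrable (fun θ : ℝ => ‖f (circleMap 0 (r' : ℝ) θ)‖)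
      MeasureTheory.volume 0 (2*Real.pi) := by
    apply ContinuousOn.intervalIntegrable
    rwa [Set.uIcc_of_le (by positivity)]
  have hintle : (∫ θ : ℝ in (0)..(2*Real.pi), ‖f (circleMap 0 (r' : ℝ) θ)‖) ≤ 2*Real.pi*Q := by
    calc (∫ θ : ℝ in (0)..(2*Real.pi), ‖f (circleMap 0 (r' : ℝ) θ)‖)
        ≤ ∫ _θ : ℝ in (0)..(2*Real.pi), Q :=
          intervalIntegral.integral_mono_on (by positivity) hint
            intervalIntegrable_const (fun θ _ => hcirc θ)
      _ = 2*Real.pi*Q := by rw [intervalIntegral.integral_const, smul_eq_mul]; ring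
  -- Cauchy estimate
  have hco := norm_cauchyPowerSeries_le f 0 (r' : ℝ) k
  rw [← heq] at hco
  have hnorm : ‖ContinuousMultilinearMap.mkPiRing ℂ (Fin k) (B ^ k)‖ = ‖B ^ k‖ := by
    rw [ContinuousMultilinearMap.norm_mkPiRing]
  rw [hnorm] at hco
  have habs : |(r' : ℝ)|⁻¹ = ρ₁ := by
    rw [abs_of_nonneg (by positivity), hr'coe, inv_inv]
  rw [habs] at hco
  calc ‖B ^ k‖ ≤ ((2 * Real.pi)⁻¹ * ∫ θ : ℝ in (0)..(2*Real.pi), ‖f (circleMap 0 (r' : ℝ) θ)‖)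
        * ρ₁ ^ k := hco
    _ ≤ ((2 * Real.pi)⁻¹ * (2*Real.pi*Q)) * ρ₁ ^ k := by
        have h2pi : (0:ℝ) < 2 * Real.pi := by positivity
        gcongr
    _ = Q * ρ₁ ^ k := by field_simp
    _ ≤ (Q + 1) * ρ₁ ^ k := by
        have : (0:ℝ) ≤ ρ₁ ^ k := by positivity
        nlinarith

lemma abs_le_specRad (A : Matrix (Fin d) (Fin d) ℝ) (μ : ℂ)
    (h : μ ∈ spectrum ℂ (A.map (algebraMap ℝ ℂ))) : Complex.abs μ ≤ specRad A := by
  set S := spectrum ℂ (A.map (algebraMap ℝ ℂ)) with hS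
  set R0 : ℝ := ‖A.map (algebraMap ℝ ℂ)‖ * ‖(1 : Matrix (Fin d) (Fin d) ℂ)‖ with hR0
  have hbd : ∀ z ∈ S, Complex.abs z ≤ R0 := by
    intro z hz
    have := spectrum.subset_closedBall_norm_mul (𝕜 := ℂ) (A.map (algebraMap ℝ ℂ)) hz
    rwa [Metric.mem_closedBall, Complex.dist_eq, sub_zero] at this
  have hBdd : BddAbove (Set.range fun z => ⨆ _ : z ∈ S, Complex.abs z) := by
    refine ⟨max 0 R0, ?_⟩
    rintro y ⟨z, rfl⟩
    show (⨆ _ : z ∈ S, Complex.abs z) ≤ max 0 R0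
    by_cases hz : z ∈ S
    · haveI : Nonempty (z ∈ S) := ⟨hz⟩
      rw [ciSup_const]
      exact le_max_of_le_right (hbd z hz)
    · haveI : IsEmpty (z ∈ S) := ⟨hz⟩
      rw [Real.iSup_of_isEmpty]
      exact le_max_left 0 R0
  have : Complex.abs μ = ⨆ _ : μ ∈ S, Complex.abs μ := by
    haveI : Nonempty (μ ∈ S) := ⟨h⟩
    rw [ciSup_const]
  rw [specRad, this]
  exact le_ciSup hBdd μ

end Aux

/-- Uniform power decay: if `ρ(A) ≤ ρ₀ < ρ₁ < 1` and `‖A‖ ≤ A*`, then `‖A^k‖ ≤ C ρ₁^k` with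
`C = C(ρ₀, ρ₁, A*)` uniform over all such matrices. -/
theorem stmt_8 {d : ℕ} (ρ₀ ρ₁ Astar : ℝ) (h0 : 0 ≤ ρ₀) (h01 : ρ₀ < ρ₁) (h11 : ρ₁ < 1)
    (hA : 0 ≤ Astar) :
    ∃ C : ℝ, 0 < C ∧ ∀ A : Matrix (Fin d) (Fin d) ℝ,
      specRad A ≤ ρ₀ → matOpNorm A ≤ Astar →
      ∀ k : ℕ, matOpNorm (A ^ k) ≤ C * ρ₁ ^ k := by
  obtain ⟨C, hC, hbound⟩ := complex_power_bound (d := d) ρ₀ ρ₁ Astar h0 h01 h11 hA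
  refine ⟨C, hC, ?_⟩
  intro A hspec hnorm k
  set B : Matrix (Fin d) (Fin d) ℂ := A.map (algebraMap ℝ ℂ) with hB
  have h1 : ∀ μ ∈ spectrum ℂ B, Complex.abs μ ≤ ρ₀ :=
    fun μ hμ => (abs_le_specRad A μ hμ).trans hspec
  have h2 : ∀ i j, Complex.abs (B i j) ≤ Astar := by
    intro i j
    have : Complex.abs (B i j) = |A i j| := by
      rw [hB, Matrix.map_apply]
      exact Complex.abs_ofReal _
    rw [this]
    calc |A i j| = ‖A i j‖ := (Real.norm_eq_abs _).symm
      _ ≤ ‖Matrix.toEuclideanCLM (𝕜 := ℝ) A‖ := entry_le_opNorm A i j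
      _ ≤ Astar := hnorm
  have hmap : (A ^ k).map (algebraMap ℝ ℂ) = B ^ k := by
    rw [hB, ← RingHom.mapMatrix_apply, ← RingHom.mapMatrix_apply, map_pow]
  calc matOpNorm (A ^ k) ≤ ‖(A ^ k).map (algebraMap ℝ ℂ)‖ := real_opNorm_le_complex (A ^ k)
    _ = ‖B ^ k‖ := by rw [hmap]
    _ ≤ C * ρ₁ ^ k := hbound B h1 h2 k
end

section
/- Let g : [0,1] → ℝ be bounded by C_f and have finite p-variation. Define F(u) = ∫_0^u g(v) dv and, for integers 0 ≤ m < n, the truncated Riemann sum I(u) = (1/n) ∑_{t=m+1}^{⌊nu⌋} g(t/n). Then sup_{u ∈ [0,1]} |I(u) − ∫_{(m+1)/n ∧ u}^u g(v) dv| ≤ ‖g‖_{p-var} n^{−1/p} + C_f/n, and sup_{u ∈ [0,1]} |I(u) − F(u)| ≤ ‖g‖_{p-var} n^{−1/p} + C_f (m+2)/n. -/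
open MeasureTheory Finset

/-- The set of partition sums defining the `p`-variation of `g` on `[0,1]`. -/
noncomputable def pVarSums {E : Type*} [NormedAddCommGroup E] (p : ℝ) (g : ℝ → E) : Set ℝ :=
  {V | ∃ (m : ℕ) (u : ℕ → ℝ), 0 < m ∧ u 0 = 0 ∧ u m = 1 ∧
    (∀ i < m, u i < u (i + 1)) ∧
    V = (∑ i ∈ Finset.range m, ‖g (u (i + 1)) - g (u i)‖ ^ p) ^ (1 / p)}

/-- The `p`-variation of `g` on `[0,1]`. -/
noncomputable def pVar {E : Type*} [NormedAddCommGroup E] (p : ℝ) (g : ℝ → E) : ℝ :=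
  sSup (pVarSums p g)

open MeasureTheory Finset


/-- Selection: near-supremum point in the open interval. -/
lemma sel (g : ℝ → ℝ) {a b c ε : ℝ} (hab : a < b) (hε : 0 < ε) :
    ∃ v, a < v ∧ v < b ∧ |∫ x in a..b, (c - g x)| ≤ (b - a) * |c - g v| + ε := by
  by_contra hcon
  push_neg at hcon
  set M := |∫ x in a..b, (c - g x)| with hM
  have hba : (0:ℝ) < b - a := by linarith
  have hbound : ∀ x ∈ Set.Ioo a b, ‖c - g x‖ ≤ (M - ε) / (b - a) := by
    intro x hx
    have := hcon x hx.1 hx.2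
    rw [Real.norm_eq_abs]
    rw [le_div_iff₀ hba]
    nlinarith [this]
  have hIoc : (∫ x in a..b, (c - g x)) = ∫ x in Set.Ioo a b, (c - g x) := by
    rw [intervalIntegral.integral_of_le hab.le, integral_Ioc_eq_integral_Ioo]
  have hle : ‖∫ x in Set.Ioo a b, (c - g x)‖ ≤ (M - ε) / (b - a) * (volume (Set.Ioo a b)).toReal :=
    norm_setIntegral_le_of_norm_le_const
      (by rw [Real.volume_Ioo]; exact ENNReal.ofReal_lt_top) hbound
  rw [Real.volume_Ioo, ENNReal.toReal_ofReal hba.le, div_mul_cancel₀ _ hba.ne',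
    Real.norm_eq_abs, ← hIoc, ← hM] at hle
  linarith

lemma pVar_mem_le {p : ℝ} {g : ℝ → ℝ} (hfin : BddAbove (pVarSums p g))
    {V : ℝ} (hV : V ∈ pVarSums p g) : V ≤ pVar p g := le_csSup hfin hV

lemma pVar_nonneg {p : ℝ} {g : ℝ → ℝ} (hfin : BddAbove (pVarSums p g)) :
    0 ≤ pVar p g := by
  have hV : ((∑ i ∈ Finset.range 1, ‖g ((i:ℝ) + 1) - g (i:ℝ)‖ ^ p) ^ (1/p)) ∈ pVarSums p g := by
    refine ⟨1, fun i => (i:ℝ), one_pos, by norm_num, by norm_num, ?_, by norm_num⟩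
    intro i _; push_cast; linarith
  refine le_trans ?_ (le_csSup hfin hV)
  positivity

/-- Partition-sum bound: interleaved strictly increasing pairs in (0,1). -/
lemma sumDelta_strict (p : ℝ) (hp : 1 ≤ p) (g : ℝ → ℝ) (hfin : BddAbove (pVarSums p g))
    (N : ℕ) (a v : ℕ → ℝ)
    (h0 : ∀ j < N, 0 < a j) (h1 : ∀ j < N, a j < v j) (h2 : ∀ j < N, v j < 1)
    (h3 : ∀ j, j + 1 < N → v j < a (j + 1)) :
    ∑ j ∈ Finset.range N, |g (v j) - g (a j)| ^ p ≤ (pVar p g) ^ p := by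
  have hp0 : (0:ℝ) < p := lt_of_lt_of_le one_pos hp
  rcases Nat.eq_zero_or_pos N with hN | hN
  · subst hN
    simp only [Finset.range_zero, Finset.sum_empty]
    exact Real.rpow_nonneg (pVar_nonneg hfin) p
  set uu : ℕ → ℝ := fun i =>
    if i = 0 then 0 else if 2*N+1 ≤ i then 1
    else if i % 2 = 1 then a (i / 2) else v (i / 2 - 1) with huu
  have hua : ∀ j < N, uu (2*j+1) = a j := by
    intro j hj
    simp only [huu]
    rw [if_neg (by omega), if_neg (by omega), if_pos (by omega)]
    congr 1; omega
  have huv : ∀ j < N, uu (2*j+2) = v j := by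
    intro j hj
    simp only [huu]
    rw [if_neg (by omega), if_neg (by omega), if_neg (by omega)]
    congr 1; omega
  have hmono : ∀ i < 2*N+1, uu i < uu (i+1) := by
    intro i hi
    rcases Nat.eq_zero_or_pos i with h0' | hpos
    · subst h0'
      have : uu 1 = a 0 := by have := hua 0 hN; simpa using this
      rw [this]
      simp only [huu, if_pos rfl]
      exact h0 0 hN
    rcases Nat.even_or_odd i with ⟨j, hj⟩ | ⟨j, hj⟩
    · -- i = 2j even, i ≥ 2, so i = 2(j-1)+2 with j ≥ 1
      have hj1 : 1 ≤ j := by omega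
      have hjN : j - 1 < N := by omega
      have hei : i = 2*(j-1)+2 := by omega
      rw [hei, huv _ hjN]
      rcases eq_or_lt_of_le (show j ≤ N by omega) with hjN' | hjN'
      · have : 2*(j-1)+2+1 = 2*N+1 := by omega
        rw [this]
        simp only [huu]
        rw [if_neg (by omega), if_pos (le_refl _)]
        exact h2 _ hjN
      · have : 2*(j-1)+2+1 = 2*j+1 := by omega
        rw [this, hua _ (by omega)]
        have := h3 (j-1) (by omega)
        have hj' : j - 1 + 1 = j := by omega
        rwa [hj'] at this
    · -- i = 2j+1 odd
      have hjN : j < N := by omega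
      rw [hj]
      have e : 2*j+1+1 = 2*j+2 := by omega
      rw [e, hua _ hjN, huv _ hjN]
      exact h1 _ hjN
  set S := ∑ i ∈ Finset.range (2*N+1), ‖g (uu (i + 1)) - g (uu i)‖ ^ p with hS
  have hSnn : 0 ≤ S := Finset.sum_nonneg fun i _ => Real.rpow_nonneg (norm_nonneg _) p
  have hmem : S ^ (1/p) ∈ pVarSums p g := by
    refine ⟨2*N+1, uu, by omega, ?_, ?_, hmono, rfl⟩
    · simp [huu]
    · simp only [huu]; rw [if_neg (by omega), if_pos (le_refl _)]
  have hle : S ^ (1/p) ≤ pVar p g := pVar_mem_le hfin hmem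
  have hSle : S ≤ (pVar p g) ^ p := by
    have h := Real.rpow_le_rpow (Real.rpow_nonneg hSnn _) hle hp0.le
    rwa [← Real.rpow_mul hSnn, one_div_mul_cancel hp0.ne', Real.rpow_one] at h
  refine le_trans ?_ hSle
  have hsub : ∑ j ∈ Finset.range N, |g (v j) - g (a j)| ^ p
      = ∑ i ∈ (Finset.range N).image (fun j => 2*j+1), ‖g (uu (i+1)) - g (uu i)‖ ^ p := by
    rw [Finset.sum_image (by intro x _ y _ h; simp only at h; omega)]
    refine Finset.sum_congr rfl fun j hj => ?_
    rw [Finset.mem_range] at hj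
    have e1 : 2*j+1+1 = 2*j+2 := by omega
    rw [e1, hua _ hj, huv _ hj, Real.norm_eq_abs]
  rw [hsub]
  refine Finset.sum_le_sum_of_subset_of_nonneg ?_ (fun i _ _ => Real.rpow_nonneg (norm_nonneg _) p)
  intro i hi
  simp only [Finset.mem_image, Finset.mem_range] at hi ⊢
  obtain ⟨j, hj, rfl⟩ := hi; omega

/-- Non-strict version: the last pair may be degenerate. -/
lemma sumDelta (p : ℝ) (hp : 1 ≤ p) (g : ℝ → ℝ) (hfin : BddAbove (pVarSums p g))
    (N : ℕ) (a v : ℕ → ℝ)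
    (h0 : ∀ j < N, 0 < a j) (h1 : ∀ j < N, a j ≤ v j)
    (h2 : ∀ j < N, a j < v j → v j < 1)
    (h3 : ∀ j, j + 1 < N → v j < a (j + 1)) (h4 : ∀ j, j + 1 < N → a j < v j) :
    ∑ j ∈ Finset.range N, |g (v j) - g (a j)| ^ p ≤ (pVar p g) ^ p := by
  have hp0 : (0:ℝ) < p := lt_of_lt_of_le one_pos hp
  rcases Nat.eq_zero_or_pos N with hN | hN
  · subst hN; simp only [Finset.range_zero, Finset.sum_empty]
    exact Real.rpow_nonneg (pVar_nonneg hfin) p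
  obtain ⟨M, rfl⟩ : ∃ M, N = M + 1 := ⟨N - 1, by omega⟩
  have hstrict : ∀ j < M, a j < v j := fun j hj => h4 j (by omega)
  rcases eq_or_lt_of_le (h1 M (by omega)) with heq | hlt
  · rw [Finset.sum_range_succ, ← heq, sub_self, abs_zero, Real.zero_rpow hp0.ne', add_zero]
    exact sumDelta_strict p hp g hfin M a v (fun j hj => h0 j (by omega))
      hstrict (fun j hj => h2 j (by omega) (hstrict j hj))
      (fun j hj => h3 j (by omega))
  · have hstrict' : ∀ j < M + 1, a j < v j := by
      intro j hj
      rcases eq_or_lt_of_le (Nat.lt_succ_iff.mp hj) with rfl | hjM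
      · exact hlt
      · exact hstrict j hjM
    exact sumDelta_strict p hp g hfin (M+1) a v h0 hstrict'
      (fun j hj => h2 j hj (hstrict' j hj)) h3

/-- Discrete Hölder/power-mean bound. -/
lemma holder_sum (p : ℝ) (hp : 1 ≤ p) (N : ℕ) (z : ℕ → ℝ) (hz : ∀ j, 0 ≤ z j) :
    ∑ j ∈ Finset.range N, z j
      ≤ (N:ℝ) ^ (1 - 1/p) * (∑ j ∈ Finset.range N, z j ^ p) ^ (1/p) := by
  have hp0 : (0:ℝ) < p := lt_of_lt_of_le one_pos hp
  have key := Real.rpow_sum_le_const_mul_sum_rpow (Finset.range N) z hp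
  simp only [Finset.card_range] at key
  have habs : ∀ j ∈ Finset.range N, |z j| = z j := fun j _ => abs_of_nonneg (hz j)
  rw [show (∑ i ∈ Finset.range N, |z i| ^ p) = ∑ i ∈ Finset.range N, z i ^ p from
    Finset.sum_congr rfl fun j hj => by rw [habs j hj]] at key
  rw [show (∑ i ∈ Finset.range N, |z i|) = ∑ i ∈ Finset.range N, z i from
    Finset.sum_congr rfl habs] at key
  have hsum : (0:ℝ) ≤ ∑ j ∈ Finset.range N, z j := Finset.sum_nonneg fun j _ => hz j
  have hsp : (0:ℝ) ≤ ∑ j ∈ Finset.range N, z j ^ p :=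
    Finset.sum_nonneg fun j _ => Real.rpow_nonneg (hz j) p
  have h2 := Real.rpow_le_rpow (Real.rpow_nonneg hsum p) key (le_of_lt (by positivity : (0:ℝ) < 1/p))
  rw [← Real.rpow_mul hsum, mul_one_div_cancel hp0.ne', Real.rpow_one,
    Real.mul_rpow (by positivity) hsp, ← Real.rpow_mul (Nat.cast_nonneg N)] at h2
  calc ∑ j ∈ Finset.range N, z j
      ≤ (N:ℝ) ^ ((p-1) * (1/p)) * (∑ j ∈ Finset.range N, z j ^ p) ^ (1/p) := h2
    _ = (N:ℝ) ^ (1 - 1/p) * (∑ j ∈ Finset.range N, z j ^ p) ^ (1/p) := by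
        congr 1
        rw [show (p-1) * (1/p) = 1 - 1/p by field_simp]

lemma gint_sub {g : ℝ → ℝ} (hint : IntervalIntegrable g volume 0 1)
    {x y : ℝ} (hx0 : 0 ≤ x) (hx1 : x ≤ 1) (hy0 : 0 ≤ y) (hy1 : y ≤ 1) :
    IntervalIntegrable g volume x y := by
  apply hint.mono_set
  apply Set.uIcc_subset_uIcc <;> rw [Set.uIcc_of_le (by norm_num : (0:ℝ) ≤ 1)]
  · exact ⟨hx0, hx1⟩
  · exact ⟨hy0, hy1⟩

set_option maxHeartbeats 2000000 in
lemma core (p Cf : ℝ) (hp : 1 ≤ p) (g : ℝ → ℝ)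
    (hbd : ∀ v ∈ Set.Icc (0 : ℝ) 1, |g v| ≤ Cf)
    (hfin : BddAbove (pVarSums p g))
    (hint : IntervalIntegrable g volume 0 1)
    (m n : ℕ) (hmn : m < n) (u : ℝ) (hu0 : 0 ≤ u) (hu1 : u ≤ 1) :
    |(1 / (n : ℝ)) * ∑ t ∈ Finset.Icc (m + 1) ⌊(n : ℝ) * u⌋₊, g ((t : ℝ) / n)
        - ∫ v in (((m + 1 : ℝ) / n) ⊓ u)..u, g v|
      ≤ pVar p g * (n : ℝ) ^ (-(1 / p)) + Cf / n := by
  have hp0 : (0:ℝ) < p := lt_of_lt_of_le one_pos hp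
  have hn0 : (0:ℝ) < n := by
    have : 0 < n := by omega
    exact_mod_cast this
  have hCf : 0 ≤ Cf := le_trans (abs_nonneg _) (hbd 0 ⟨le_refl _, by norm_num⟩)
  have hpV : 0 ≤ pVar p g := pVar_nonneg hfin
  have hrhs0 : 0 ≤ pVar p g * (n:ℝ) ^ (-(1/p)) + Cf / n :=
    add_nonneg (mul_nonneg hpV (Real.rpow_nonneg hn0.le _)) (div_nonneg hCf hn0.le)
  set k := ⌊(n:ℝ) * u⌋₊ with hkdef
  have hkle : (k:ℝ) ≤ (n:ℝ) * u := Nat.floor_le (by positivity)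
  have hklt : (n:ℝ) * u < (k:ℝ) + 1 := Nat.lt_floor_add_one _
  have hkn : k ≤ n := by
    have h' : (k:ℝ) ≤ (n:ℝ) := le_trans hkle (by nlinarith)
    exact_mod_cast h'
  by_cases hcase : k ≤ m
  · rw [Finset.Icc_eq_empty (by omega), Finset.sum_empty, mul_zero]
    have humin : ((m + 1 : ℝ) / n) ⊓ u = u := by
      apply min_eq_right
      rw [le_div_iff₀ hn0]
      have hkm : (k:ℝ) ≤ (m:ℝ) := by exact_mod_cast hcase
      nlinarith
    rw [humin, intervalIntegral.integral_same, sub_zero, abs_zero]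
    exact hrhs0
  · push_neg at hcase
    set N := k - m with hNdef
    have hN1 : 1 ≤ N := by omega
    have hNn : N ≤ n := by omega
    set w : ℕ → ℝ := fun j => if j < N then ((m:ℝ) + 1 + j) / n else u with hw
    have hwj : ∀ j < N, w j = ((m:ℝ) + 1 + j) / n := by
      intro j hj; simp only [hw]; rw [if_pos hj]
    have hwN : w N = u := by simp only [hw]; rw [if_neg (lt_irrefl N)]
    have hklast : w (N - 1) = (k:ℝ) / n := by
      rw [hwj _ (by omega)]
      congr 1
      have h' : (N - 1) + (m + 1) = k := by omega
      have h'' : ((N - 1 : ℕ) : ℝ) + ((m:ℝ) + 1) = (k : ℝ) := by exact_mod_cast h'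
      linarith
    have hkun : (k:ℝ) / n ≤ u := by rw [div_le_iff₀ hn0]; nlinarith
    have hwmem : ∀ j, 0 ≤ w j ∧ w j ≤ 1 := by
      intro j
      by_cases hj : j < N
      · rw [hwj j hj]
        constructor
        · positivity
        · rw [div_le_one hn0]
          have h' : ((m + 1 + j : ℕ) : ℝ) ≤ (n : ℝ) := by
            have : m + 1 + j ≤ n := by omega
            exact_mod_cast this
          push_cast at h'
          linarith
      · have : w j = u := by simp only [hw]; rw [if_neg hj]
        rw [this]; exact ⟨hu0, hu1⟩
    have hstrict : ∀ j, j + 1 < N → w j < w (j + 1) := by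
      intro j hj
      rw [hwj j (by omega), hwj (j+1) hj]
      apply div_lt_div_of_pos_right ?_ hn0
      push_cast; linarith
    have hulek : u ≤ ((k:ℝ) + 1) / n := by rw [le_div_iff₀ hn0]; nlinarith
    have hmono : ∀ j < N, w j ≤ w (j + 1) := by
      intro j hj
      rcases eq_or_lt_of_le (Nat.succ_le_of_lt hj) with he | hlt
      · have hj' : j = N - 1 := by omega
        subst hj'
        rw [hklast, show N - 1 + 1 = N from by omega, hwN]
        exact hkun
      · exact (hstrict j hlt).le
    have hgap : ∀ j < N, w (j + 1) - w j ≤ 1 / n := by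
      intro j hj
      rcases eq_or_lt_of_le (Nat.succ_le_of_lt hj) with he | hlt
      · have hj' : j = N - 1 := by omega
        subst hj'
        rw [hklast, show N - 1 + 1 = N from by omega, hwN]
        have e : ((k:ℝ) + 1) / n = (k:ℝ)/n + 1/n := by ring
        linarith [hulek]
      · rw [hwj j (by omega), hwj (j+1) hlt]
        rw [div_sub_div_same, div_le_div_iff₀ hn0 hn0]
        push_cast; nlinarith
    have hwint : ∀ j < N, IntervalIntegrable g volume (w j) (w (j + 1)) := fun j _ =>
      gint_sub hint (hwmem j).1 (hwmem j).2 (hwmem (j+1)).1 (hwmem (j+1)).2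
    have hminB : ((m + 1 : ℝ) / n) ⊓ u = w 0 := by
      rw [hwj 0 (by omega)]
      have hle' : ((m:ℝ) + 1) / n ≤ u := by
        refine le_trans ?_ hkun
        rw [div_le_div_iff₀ hn0 hn0]
        have : ((m:ℝ) + 1) ≤ (k:ℝ) := by exact_mod_cast hcase
        nlinarith
      rw [min_eq_left hle']
      norm_num
    have hB : (∫ v in (((m + 1 : ℝ) / n) ⊓ u)..u, g v)
        = ∑ j ∈ Finset.range N, ∫ v in w j..w (j + 1), g v := by
      rw [intervalIntegral.sum_integral_adjacent_intervals hwint, hminB, hwN]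
    have hA : (1 / (n : ℝ)) * ∑ t ∈ Finset.Icc (m + 1) k, g ((t : ℝ) / n)
        = ∑ j ∈ Finset.range N, g (w j) * (1 / n) := by
      rw [← Finset.Ico_add_one_right_eq_Icc, Finset.sum_Ico_eq_sum_range,
        show k + 1 - (m + 1) = N from by omega, Finset.mul_sum]
      refine Finset.sum_congr rfl fun j hj => ?_
      rw [Finset.mem_range] at hj
      rw [hwj j hj, show ((m + 1 + j : ℕ) : ℝ) = (m:ℝ) + 1 + j from by push_cast; ring]
      ring
    set D : ℕ → ℝ := fun j => ∫ v in w j..w (j + 1), (g (w j) - g v) with hD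
    have hDj : ∀ j < N, D j
        = g (w j) * (w (j + 1) - w j) - ∫ v in w j..w (j + 1), g v := by
      intro j hj
      simp only [hD]
      rw [intervalIntegral.integral_sub intervalIntegrable_const (hwint j hj),
        intervalIntegral.integral_const, smul_eq_mul, mul_comm]
    have hNsplit : N - 1 + 1 = N := by omega
    have hsplit : (1 / (n : ℝ)) * (∑ t ∈ Finset.Icc (m + 1) k, g ((t : ℝ) / n))
          - (∫ v in (((m + 1 : ℝ) / n) ⊓ u)..u, g v)
        = (∑ j ∈ Finset.range N, D j)
          + g (w (N - 1)) * (1 / n - (w N - w (N - 1))) := by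
      rw [hA, hB, Finset.sum_congr rfl (fun j hj => hDj j (Finset.mem_range.mp hj)),
        Finset.sum_sub_distrib]
      have hterm : ∀ j ∈ Finset.range N, g (w j) * (1 / (n:ℝ))
          = g (w j) * (w (j + 1) - w j)
            + (if j = N - 1 then g (w (N - 1)) * (1 / n - (w N - w (N - 1))) else 0) := by
        intro j hj
        rw [Finset.mem_range] at hj
        by_cases hje : j = N - 1
        · subst hje
          rw [if_pos rfl, hNsplit]
          ring
        · rw [if_neg hje]
          have hj1 : j + 1 < N := by omega
          have : w (j + 1) - w j = 1 / n := by
            rw [hwj j (by omega), hwj (j+1) hj1, div_sub_div_same]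
            congr 1
            push_cast; ring
          rw [this, add_zero]
      rw [Finset.sum_congr rfl hterm, Finset.sum_add_distrib, Finset.sum_ite_eq' (Finset.range N)]
      rw [if_pos (Finset.mem_range.mpr (by omega : N - 1 < N))]
      ring
    have hlastb : |g (w (N - 1)) * (1 / n - (w N - w (N - 1)))| ≤ Cf / n := by
      rw [abs_mul]
      have h1 : |g (w (N - 1))| ≤ Cf := hbd _ ⟨(hwmem _).1, (hwmem _).2⟩
      have h2 : |1 / (n:ℝ) - (w N - w (N - 1))| ≤ 1 / n := by
        rw [hwN, hklast, abs_le]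
        have e : ((k:ℝ) + 1) / n = (k:ℝ)/n + 1/n := by ring
        constructor <;> [nlinarith [hulek]; nlinarith [hkun]]
      calc |g (w (N - 1))| * |1 / (n:ℝ) - (w N - w (N - 1))| ≤ Cf * (1 / n) :=
            mul_le_mul h1 h2 (abs_nonneg _) hCf
        _ = Cf / n := by ring
    have htri : |(1 / (n : ℝ)) * (∑ t ∈ Finset.Icc (m + 1) k, g ((t : ℝ) / n))
          - (∫ v in (((m + 1 : ℝ) / n) ⊓ u)..u, g v)|
        ≤ (∑ j ∈ Finset.range N, |D j|) + Cf / n := by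
      rw [hsplit]
      exact le_trans (abs_add_le _ _)
        (add_le_add (Finset.abs_sum_le_sum_abs _ _) hlastb)
    have hsum : ∑ j ∈ Finset.range N, |D j| ≤ pVar p g * (n:ℝ) ^ (-(1/p)) := by
      refine le_of_forall_pos_le_add fun ε hε => ?_
      have hch : ∀ j, ∃ x, j < N → (w j ≤ x ∧ x ≤ w (j + 1)
          ∧ (w j < w (j + 1) → (w j < x ∧ x < w (j + 1)))
          ∧ |D j| ≤ (1 / n) * |g x - g (w j)| + ε / n) := by
        intro j
        by_cases hj : j < N
        · rcases eq_or_lt_of_le (hmono j hj) with heq | hlt2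
          · refine ⟨w j, fun _ => ⟨le_refl _, heq.le, fun hcon => absurd heq (ne_of_lt hcon), ?_⟩⟩
            have hD0 : D j = 0 := by
              simp only [hD]
              rw [← heq, intervalIntegral.integral_same]
            rw [hD0, abs_zero, sub_self, abs_zero, mul_zero, zero_add]
            positivity
          · obtain ⟨v, hv1, hv2, hv3⟩ := sel g hlt2 (show (0:ℝ) < ε / n by positivity)
            refine ⟨v, fun _ => ⟨hv1.le, hv2.le, fun _ => ⟨hv1, hv2⟩, ?_⟩⟩
            refine le_trans hv3 (add_le_add_left ?_ _)
            rw [abs_sub_comm (g (w j)) (g v)]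
            exact mul_le_mul_of_nonneg_right (hgap j hj) (abs_nonneg _)
        · exact ⟨0, fun h => absurd h hj⟩
      choose x hx using hch
      set z : ℕ → ℝ := fun j => |g (x j) - g (w j)| with hz
      have hz0 : ∀ j, 0 ≤ z j := fun j => abs_nonneg _
      have hNε : (N:ℝ) * (ε / n) ≤ ε := by
        rw [mul_div_assoc'] at *
        rw [div_le_iff₀ hn0]
        have : (N:ℝ) ≤ (n:ℝ) := by exact_mod_cast hNn
        nlinarith
      have h1 : ∑ j ∈ Finset.range N, |D j|
          ≤ (1 / n) * (∑ j ∈ Finset.range N, z j) + ε := by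
        calc ∑ j ∈ Finset.range N, |D j|
            ≤ ∑ j ∈ Finset.range N, ((1 / (n:ℝ)) * z j + ε / n) :=
              Finset.sum_le_sum fun j hj => (hx j (Finset.mem_range.mp hj)).2.2.2
          _ = (1 / n) * (∑ j ∈ Finset.range N, z j) + (N:ℝ) * (ε / n) := by
              rw [Finset.sum_add_distrib, ← Finset.mul_sum, Finset.sum_const,
                Finset.card_range, nsmul_eq_mul]
          _ ≤ (1 / n) * (∑ j ∈ Finset.range N, z j) + ε := by linarith
      have h2 := holder_sum p hp N z hz0
      have h3 : ∑ j ∈ Finset.range N, z j ^ p ≤ (pVar p g) ^ p := by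
        refine sumDelta p hp g hfin N w x ?_ ?_ ?_ ?_ ?_
        · intro j hj; rw [hwj j hj]; positivity
        · intro j hj; exact (hx j hj).1
        · intro j hj hsx
          rcases eq_or_lt_of_le (hmono j hj) with heq | hlt2
          · have h1' := (hx j hj).2.1
            rw [← heq] at h1'
            linarith
          · exact lt_of_lt_of_le ((hx j hj).2.2.1 hlt2).2 (hwmem (j+1)).2
        · intro j hj
          exact ((hx j (by omega)).2.2.1 (hstrict j hj)).2
        · intro j hj
          exact ((hx j (by omega)).2.2.1 (hstrict j hj)).1
      have hzp0 : 0 ≤ ∑ j ∈ Finset.range N, z j ^ p :=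
        Finset.sum_nonneg fun j _ => Real.rpow_nonneg (hz0 j) p
      have h4 : (∑ j ∈ Finset.range N, z j ^ p) ^ (1/p) ≤ pVar p g := by
        have h' := Real.rpow_le_rpow hzp0 h3 (by positivity : (0:ℝ) ≤ 1/p)
        rwa [← Real.rpow_mul hpV, mul_one_div_cancel hp0.ne', Real.rpow_one] at h'
      have h5 : ((N:ℝ)) ^ (1 - 1/p) ≤ ((n:ℝ)) ^ (1 - 1/p) := by
        have hep : (0:ℝ) ≤ 1 - 1/p := by
          have : 1/p ≤ 1 := by rw [div_le_one hp0]; exact hp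
          linarith
        exact Real.rpow_le_rpow (Nat.cast_nonneg N) (by exact_mod_cast hNn) hep
      have h6 : (1 / (n:ℝ)) * ((n:ℝ) ^ ((1:ℝ) - 1/p) * pVar p g)
          = pVar p g * (n:ℝ) ^ (-(1/p)) := by
        rw [show (1:ℝ) - 1/p = 1 + (-(1/p)) from by ring, Real.rpow_add hn0, Real.rpow_one]
        field_simp
      have h7 : (1 / (n:ℝ)) * (∑ j ∈ Finset.range N, z j)
          ≤ pVar p g * (n:ℝ) ^ (-(1/p)) := by
        rw [← h6]
        refine mul_le_mul_of_nonneg_left ?_ (by positivity)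
        refine le_trans h2 ?_
        exact mul_le_mul h5 h4 (Real.rpow_nonneg hzp0 _) (Real.rpow_nonneg hn0.le _)
      linarith
    calc |(1 / (n : ℝ)) * (∑ t ∈ Finset.Icc (m + 1) k, g ((t : ℝ) / n))
          - (∫ v in (((m + 1 : ℝ) / n) ⊓ u)..u, g v)|
        ≤ (∑ j ∈ Finset.range N, |D j|) + Cf / n := htri
      _ ≤ pVar p g * (n:ℝ) ^ (-(1/p)) + Cf / n := by linarith


set_option maxHeartbeats 2000000 in
/-- Lemma C.4: for a bounded function `g` of finite `p`-variation, the truncated Riemann sum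
`I(u) = (1/n) ∑_{t=m+1}^{⌊nu⌋} g(t/n)` approximates the integrals
`∫_{(m+1)/n ∧ u}^u g` and `F(u) = ∫_0^u g` uniformly in `u ∈ [0,1]`. -/
theorem stmt_14 (p Cf : ℝ) (hp : 1 ≤ p) (g : ℝ → ℝ)
    (hbd : ∀ v ∈ Set.Icc (0 : ℝ) 1, |g v| ≤ Cf)
    (hfin : BddAbove (pVarSums p g))
    (hint : IntervalIntegrable g volume 0 1)
    (m n : ℕ) (hmn : m < n) :
    (∀ u ∈ Set.Icc (0 : ℝ) 1,
      |(1 / (n : ℝ)) * ∑ t ∈ Finset.Icc (m + 1) ⌊(n : ℝ) * u⌋₊, g ((t : ℝ) / n)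
          - ∫ v in (((m + 1 : ℝ) / n) ⊓ u)..u, g v|
        ≤ pVar p g * (n : ℝ) ^ (-(1 / p)) + Cf / n) ∧
    (∀ u ∈ Set.Icc (0 : ℝ) 1,
      |(1 / (n : ℝ)) * ∑ t ∈ Finset.Icc (m + 1) ⌊(n : ℝ) * u⌋₊, g ((t : ℝ) / n)
          - ∫ v in (0 : ℝ)..u, g v|
        ≤ pVar p g * (n : ℝ) ^ (-(1 / p)) + Cf * ((m : ℝ) + 2) / n) := by
  have hn0 : (0:ℝ) < n := by
    have : 0 < n := by omega
    exact_mod_cast this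
  have hCf : 0 ≤ Cf := le_trans (abs_nonneg _) (hbd 0 ⟨le_refl _, by norm_num⟩)
  refine ⟨fun u hu => core p Cf hp g hbd hfin hint m n hmn u hu.1 hu.2, fun u hu => ?_⟩
  obtain ⟨hu0, hu1⟩ := hu
  have h1 := core p Cf hp g hbd hfin hint m n hmn u hu0 hu1
  set c := ((m + 1 : ℝ) / n) ⊓ u with hc
  have hm1n : ((m:ℝ) + 1) / n ≤ 1 := by
    rw [div_le_one hn0]
    have : (m:ℝ) + 1 ≤ (n:ℝ) := by exact_mod_cast hmn
    linarith
  have hc0 : 0 ≤ c := le_min (by positivity) hu0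
  have hc1 : c ≤ 1 := le_trans (min_le_left _ _) hm1n
  have hadd : (∫ v in (0:ℝ)..c, g v) + ∫ v in c..u, g v = ∫ v in (0:ℝ)..u, g v :=
    intervalIntegral.integral_add_adjacent_intervals
      (gint_sub hint (le_refl 0) zero_le_one hc0 hc1)
      (gint_sub hint hc0 hc1 hu0 hu1)
  have hIc : |∫ v in (0:ℝ)..c, g v| ≤ Cf * ((m:ℝ) + 1) / n := by
    have hb : ‖∫ v in (0:ℝ)..c, g v‖ ≤ Cf * |c - 0| := by
      apply intervalIntegral.norm_integral_le_of_norm_le_const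
      intro x hx
      rw [Set.uIoc_of_le hc0] at hx
      exact hbd x ⟨hx.1.le, le_trans hx.2 hc1⟩
    rw [Real.norm_eq_abs, sub_zero, abs_of_nonneg hc0] at hb
    have : Cf * c ≤ Cf * (((m:ℝ) + 1) / n) :=
      mul_le_mul_of_nonneg_left (min_le_left _ _) hCf
    calc |∫ v in (0:ℝ)..c, g v| ≤ Cf * c := hb
      _ ≤ Cf * (((m:ℝ) + 1) / n) := this
      _ = Cf * ((m:ℝ) + 1) / n := by ring
  have hsplit : (1 / (n : ℝ)) * (∑ t ∈ Finset.Icc (m + 1) ⌊(n : ℝ) * u⌋₊, g ((t : ℝ) / n))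
        - ∫ v in (0 : ℝ)..u, g v
      = ((1 / (n : ℝ)) * (∑ t ∈ Finset.Icc (m + 1) ⌊(n : ℝ) * u⌋₊, g ((t : ℝ) / n))
        - ∫ v in c..u, g v) - ∫ v in (0:ℝ)..c, g v := by
    rw [← hadd]; ring
  have htr : |(1 / (n : ℝ)) * (∑ t ∈ Finset.Icc (m + 1) ⌊(n : ℝ) * u⌋₊, g ((t : ℝ) / n))
        - ∫ v in (0 : ℝ)..u, g v|
      ≤ |(1 / (n : ℝ)) * (∑ t ∈ Finset.Icc (m + 1) ⌊(n : ℝ) * u⌋₊, g ((t : ℝ) / n))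
        - ∫ v in c..u, g v| + |∫ v in (0:ℝ)..c, g v| := by
    rw [hsplit, sub_eq_add_neg]
    exact le_trans (abs_add_le _ _) (by rw [abs_neg])
  have he : pVar p g * (n : ℝ) ^ (-(1 / p)) + Cf / n + Cf * ((m:ℝ) + 1) / n
      = pVar p g * (n : ℝ) ^ (-(1 / p)) + Cf * ((m : ℝ) + 2) / n := by ring
  linarith
end
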